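/- Let ε₀ < ε₁ ≤ u be reals with u > ε₁ and let ℓ ≥ 0 be an integer. Define C_ℓ(y) = T_ℓ(f(y))/T_ℓ(f(ε₀)) where f(y) = (u + ε₁ − 2y)/(u − ε₁) and T_ℓ is the Chebyshev polynomial. Then C_ℓ(ε₀) = 1 and for all y ∈ [ε₁, u], |C_ℓ(y)| ≤ 2·exp(−2ℓ·√((ε₁ − ε₀)/(u − ε₀))). -/

import Mathlib

lemma T_real_cosh (n : ℤ) (t : ℝ) :
    (Polynomial.Chebyshev.T ℝ n).eval (Real.cosh t) = Real.cosh (n * t) := by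
  have h := Polynomial.Chebyshev.T_complex_cos (t * Complex.I) n
  rw [Complex.cos_mul_I] at h
  have h2 : (n : ℂ) * (t * Complex.I) = ((n : ℝ) * t : ℝ) * Complex.I := by push_cast; ring
  rw [h2, Complex.cos_mul_I] at h
  have h3 := Polynomial.Chebyshev.complex_ofReal_eval_T (Real.cosh t) n
  rw [Complex.ofReal_cosh] at h3
  rw [← h3, ← Complex.ofReal_cosh] at h
  exact_mod_cast h

lemma tanh_le_self {s : ℝ} (hs : 0 ≤ s) : Real.sinh s / Real.cosh s ≤ s := by
  rw [div_le_iff₀ (Real.cosh_pos s)]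
  have mono : MonotoneOn (fun x => x * Real.cosh x - Real.sinh x) (Set.Ici (0:ℝ)) := by
    apply monotoneOn_of_deriv_nonneg (convex_Ici 0)
    · fun_prop
    · intro x _
      exact (((differentiable_id.mul Real.differentiable_cosh).sub
        Real.differentiable_sinh) x).differentiableWithinAt
    · intro x hx
      rw [interior_Ici] at hx
      have hd : HasDerivAt (fun x => x * Real.cosh x - Real.sinh x) (x * Real.sinh x) x := by
        have := ((hasDerivAt_id x).mul (Real.hasDerivAt_cosh x)).sub (Real.hasDerivAt_sinh x)
        exact this.congr_deriv (by simp)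
      rw [hd.deriv]
      exact mul_nonneg hx.le (Real.sinh_nonneg_iff.mpr hx.le)
  have := mono (Set.self_mem_Ici) (Set.mem_Ici.mpr hs) hs
  simp at this
  linarith

lemma T_lower_bound {x : ℝ} (hx : 1 < x) (n : ℕ) :
    Real.exp (2 * n * Real.sqrt ((x - 1) / (x + 1))) / 2
      ≤ (Polynomial.Chebyshev.T ℝ (n : ℤ)).eval x := by
  set t := Real.arsinh (Real.sqrt (x ^ 2 - 1)) with ht
  have ht0 : 0 ≤ t := Real.arsinh_nonneg_iff.mpr (Real.sqrt_nonneg _)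
  have hcosh : Real.cosh t = x := by
    rw [ht, Real.cosh_arsinh, Real.sq_sqrt (by nlinarith : (0:ℝ) ≤ x ^ 2 - 1)]
    have h1 : 1 + (x ^ 2 - 1) = x ^ 2 := by ring
    rw [h1, Real.sqrt_sq (by linarith)]
  have h2 : t = 2 * (t / 2) := by ring
  have hc := Real.cosh_two_mul (t / 2)
  rw [← h2, hcosh] at hc
  have hch := Real.cosh_sq (t / 2)
  have hm1 : x - 1 = 2 * Real.sinh (t / 2) ^ 2 := by linarith
  have hp1 : x + 1 = 2 * Real.cosh (t / 2) ^ 2 := by linarith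
  have hcp := Real.cosh_pos (t / 2)
  have hsn : 0 ≤ Real.sinh (t / 2) := Real.sinh_nonneg_iff.mpr (by linarith)
  have hrat : (x - 1) / (x + 1) = (Real.sinh (t / 2) / Real.cosh (t / 2)) ^ 2 := by
    rw [hm1, hp1, div_pow, mul_div_mul_left _ _ (two_ne_zero)]
  have hsqrt : Real.sqrt ((x - 1) / (x + 1)) = Real.sinh (t / 2) / Real.cosh (t / 2) := by
    rw [hrat, Real.sqrt_sq (div_nonneg hsn hcp.le)]
  have htanh : Real.sqrt ((x - 1) / (x + 1)) ≤ t / 2 := by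
    rw [hsqrt]; exact tanh_le_self (by linarith)
  have hn : (0 : ℝ) ≤ n := Nat.cast_nonneg n
  have harg : 2 * n * Real.sqrt ((x - 1) / (x + 1)) ≤ n * t := by
    nlinarith [Real.sqrt_nonneg ((x - 1) / (x + 1))]
  calc Real.exp (2 * n * Real.sqrt ((x - 1) / (x + 1))) / 2
      ≤ Real.exp (n * t) / 2 := by gcongr
    _ ≤ Real.cosh (n * t) := by
        rw [Real.cosh_eq]
        have := (Real.exp_pos (-(n * t))).le
        linarith
    _ = (Polynomial.Chebyshev.T ℝ (n : ℤ)).eval x := by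
        rw [← hcosh, T_real_cosh]
        norm_num

lemma T_abs_le_one {y : ℝ} (h1 : -1 ≤ y) (h2 : y ≤ 1) (n : ℕ) :
    |(Polynomial.Chebyshev.T ℝ (n : ℤ)).eval y| ≤ 1 := by
  have := Real.cos_arccos h1 h2
  rw [← this, Polynomial.Chebyshev.T_real_cos]
  exact Real.abs_cos_le_one _

/-- The rescaled Chebyshev polynomial `C_ℓ(y) = T_ℓ(f(y))/T_ℓ(f(ε₀))`, with
`f(y) = (u + ε₁ − 2y)/(u − ε₁)`, equals 1 at `ε₀` and is exponentially small on `[ε₁, u]`. -/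
theorem rescaled_chebyshev_AGSP_bound (ε₀ ε₁ u : ℝ) (h01 : ε₀ < ε₁) (h1u : ε₁ < u) (ℓ : ℕ)
    (f : ℝ → ℝ) (hf : ∀ y, f y = (u + ε₁ - 2 * y) / (u - ε₁))
    (C : ℝ → ℝ)
    (hC : ∀ y, C y = (Polynomial.Chebyshev.T ℝ ℓ).eval (f y) /
      (Polynomial.Chebyshev.T ℝ ℓ).eval (f ε₀)) :
    C ε₀ = 1 ∧
      ∀ y ∈ Set.Icc ε₁ u,
        |C y| ≤ 2 * Real.exp (-2 * ℓ * Real.sqrt ((ε₁ - ε₀) / (u - ε₀))) := by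
  have hue : (0:ℝ) < u - ε₁ := by linarith
  have hx₀ : 1 < f ε₀ := by
    rw [hf, lt_div_iff₀ hue]; linarith
  have key : (f ε₀ - 1) / (f ε₀ + 1) = (ε₁ - ε₀) / (u - ε₀) := by
    rw [hf, div_sub_one hue.ne', div_add_one hue.ne', div_div_div_cancel_right₀ hue.ne' _ _]
    have e1 : u + ε₁ - 2 * ε₀ - (u - ε₁) = 2 * (ε₁ - ε₀) := by ring
    have e2 : u + ε₁ - 2 * ε₀ + (u - ε₁) = 2 * (u - ε₀) := by ring
    rw [e1, e2, mul_div_mul_left _ _ (two_ne_zero)]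
  have hlow := T_lower_bound hx₀ ℓ
  rw [key] at hlow
  have hpos : 0 < (Polynomial.Chebyshev.T ℝ (ℓ:ℤ)).eval (f ε₀) :=
    lt_of_lt_of_le (by positivity) hlow
  constructor
  · rw [hC]; exact div_self hpos.ne'
  · intro y hy
    obtain ⟨hy1, hy2⟩ := hy
    have hfy1 : -1 ≤ f y := by
      rw [hf, le_div_iff₀ hue]; linarith
    have hfy2 : f y ≤ 1 := by
      rw [hf, div_le_one hue]; linarith
    set a := 2 * (ℓ:ℝ) * Real.sqrt ((ε₁ - ε₀) / (u - ε₀)) with ha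
    calc |C y| = |(Polynomial.Chebyshev.T ℝ (ℓ:ℤ)).eval (f y)| /
          (Polynomial.Chebyshev.T ℝ (ℓ:ℤ)).eval (f ε₀) := by
          rw [hC, abs_div, abs_of_pos hpos]
      _ ≤ 1 / (Polynomial.Chebyshev.T ℝ (ℓ:ℤ)).eval (f ε₀) := by
          gcongr; exact T_abs_le_one hfy1 hfy2 ℓ
      _ ≤ 1 / (Real.exp a / 2) :=
          one_div_le_one_div_of_le (by positivity) hlow
      _ = 2 * Real.exp (-a) := by
          rw [Real.exp_neg]; field_simp
      _ = 2 * Real.exp (-2 * ℓ * Real.sqrt ((ε₁ - ε₀) / (u - ε₀))) := by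
          rw [ha]; ring_nf
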